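/- Let q = ⟨q₁,q₂,q₃,q₄⟩ be a quaternion over ℝ with norm 1. Then for every integer n ≥ 1, qⁿ = ⟨ Tₙ(q₁), U_{n−1}(q₁)·q₂, U_{n−1}(q₁)·q₃, U_{n−1}(q₁)·q₄ ⟩, where Tₙ(q₁) and U_{n−1}(q₁) denote the evaluations of the Chebyshev polynomials at the real part q₁. -/

import Mathlib

open Quaternion Polynomial Polynomial.Chebyshev

/-- For a unit quaternion `q = ⟨q₁,q₂,q₃,q₄⟩` and `n ≥ 1`,
`qⁿ = ⟨Tₙ(q₁), U_{n−1}(q₁)·q₂, U_{n−1}(q₁)·q₃, U_{n−1}(q₁)·q₄⟩`. -/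
theorem unit_quaternion_pow (q : ℍ[ℝ]) (hq : ‖q‖ = 1) (n : ℕ) (hn : 1 ≤ n) :
    q ^ n =
      ⟨(T ℝ (n : ℤ)).eval q.re,
       (U ℝ ((n : ℤ) - 1)).eval q.re * q.imI,
       (U ℝ ((n : ℤ) - 1)).eval q.re * q.imJ,
       (U ℝ ((n : ℤ) - 1)).eval q.re * q.imK⟩ := by
  have hns : Quaternion.normSq q = 1 := by
    rw [Quaternion.normSq_eq_norm_mul_self, hq]; norm_num
  rw [Quaternion.normSq_def'] at hns
  have himn : q.imI ^ 2 + q.imJ ^ 2 + q.imK ^ 2 = 1 - q.re ^ 2 := by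
    linarith
  induction n with
  | zero => omega
  | succ n ih =>
    rcases Nat.eq_zero_or_pos n with h0 | h1
    · subst h0
      simp [T_one, U_zero]
      rfl
    · rw [pow_succ]
      have hT : (T ℝ ((n : ℤ) + 1)).eval q.re =
          q.re * (T ℝ (n : ℤ)).eval q.re -
            (1 - q.re ^ 2) * (U ℝ ((n : ℤ) - 1)).eval q.re := by
        have := T_eq_X_mul_T_sub_pol_U ℝ ((n : ℤ) - 1)
        rw [show (n : ℤ) - 1 + 2 = (n : ℤ) + 1 by ring,
          show (n : ℤ) - 1 + 1 = (n : ℤ) by ring] at this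
        rw [this]
        simp [eval_mul, eval_sub, eval_pow]
      have hU : (U ℝ (n : ℤ)).eval q.re =
          q.re * (U ℝ ((n : ℤ) - 1)).eval q.re + (T ℝ (n : ℤ)).eval q.re := by
        have := U_eq_X_mul_U_add_T ℝ ((n : ℤ) - 1)
        rw [show (n : ℤ) - 1 + 1 = (n : ℤ) by ring] at this
        rw [this]
        simp [eval_mul, eval_add]
      ext <;>
        simp only [Quaternion.re_mul, Quaternion.imI_mul, Quaternion.imJ_mul,
          Quaternion.imK_mul] <;> simp only [ih h1] <;> push_cast <;>
        simp only [add_sub_cancel_right, hT, hU] <;>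
        first
          | ring1
          | linear_combination (-(eval q.re (U ℝ ((n : ℤ) - 1)))) * himn
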